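/- Let N' be obtained from a network N with species X_1,...,X_s by the E2 operation: adding all inflow-outflow reactions 0 <-> X_i for every species X_i. Then delta(N') - delta(N) = rk(N) - s_N + m_N + tilde_ell_N - 1, where m_N is the number of at-most-unimolecular complexes (0 or X_i) that are not complexes of N, and tilde_ell_N is the number of linkage classes of N containing at least one at-most-unimolecular complex. Moreover delta(N') - delta(N) >= 0. -/

import Mathlib

open Submodule

/-- A complex on `s` species: a vector of nonnegative integers. -/
abbrev Cplx (s : ℕ) := Fin s → ℕ

/-- The real vector associated to a complex. -/
def toR {s : ℕ} (C : Cplx s) : Fin s → ℝ := fun i => (C i : ℝ)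

/-- A chemical reaction network on `s` species, given by its set of reactions
(ordered pairs of distinct complexes). -/
structure Network (s : ℕ) where
  reactions : Finset (Cplx s × Cplx s)
  ne : ∀ r ∈ reactions, r.1 ≠ r.2

namespace Network

variable {s : ℕ}

/-- The complexes of a network: all sources and targets of reactions. -/
def complexes (N : Network s) : Finset (Cplx s) :=
  N.reactions.image Prod.fst ∪ N.reactions.image Prod.snd

/-- One (undirected) step in the reaction graph. -/
def step (N : Network s) (C D : Cplx s) : Prop :=
  (C, D) ∈ N.reactions ∨ (D, C) ∈ N.reactions

/-- Being connected by a path in the undirected reaction graph. -/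
def linked (N : Network s) : Cplx s → Cplx s → Prop :=
  Relation.ReflTransGen N.step

/-- `C` and `D` are complexes of `N` lying in a common linkage class. -/
def sameLinkageClass (N : Network s) (C D : Cplx s) : Prop :=
  C ∈ N.complexes ∧ D ∈ N.complexes ∧ N.linked C D

/-- The linkage class of a complex `C`. -/
def linkageClass (N : Network s) (C : Cplx s) : Set (Cplx s) :=
  {D | N.linked C D}

/-- The number of complexes `c_N`. -/
def numComplexes (N : Network s) : ℕ := N.complexes.card

/-- The number of linkage classes `ℓ_N`. -/
noncomputable def numLinkage (N : Network s) : ℕ :=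
  Set.ncard {S : Set (Cplx s) | ∃ C ∈ N.complexes, S = N.linkageClass C}

/-- The number of reactions `r_N`. -/
def numReactions (N : Network s) : ℕ := N.reactions.card

/-- The stoichiometric subspace: the real span of all reaction vectors. -/
def stoichSubspace (N : Network s) : Submodule ℝ (Fin s → ℝ) :=
  Submodule.span ℝ {v | ∃ r ∈ N.reactions, v = toR r.2 - toR r.1}

/-- The rank of the network. -/
noncomputable def rank (N : Network s) : ℕ :=
  Module.finrank ℝ N.stoichSubspace

/-- The deficiency `δ(N) = c_N - ℓ_N - rk(N)`. -/
noncomputable def deficiency (N : Network s) : ℤ :=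
  (N.numComplexes : ℤ) - N.numLinkage - N.rank

/-- The cyclomatic number `cyc(N) = r_N - c_N + ℓ_N`. -/
noncomputable def cyc (N : Network s) : ℤ :=
  (N.numReactions : ℤ) - N.numComplexes + N.numLinkage

end Network

/-- The at-most-unimolecular complexes: `0` and the single species `X_i`. -/
def uniComplexes (s : ℕ) : Finset (Cplx s) :=
  insert 0 (Finset.univ.image fun i : Fin s => Pi.single i 1)

-- ================= auxiliary lemmas ===================
namespace Network
variable {s : ℕ}

lemma step_symm {N : Network s} {C D : Cplx s} (h : N.step C D) : N.step D C := h.symm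

lemma linked_symm {N : Network s} {C D : Cplx s} (h : N.linked C D) : N.linked D C :=
  by haveI : Std.Symm N.step := ⟨fun _ _ hh => hh.symm⟩; exact Relation.ReflTransGen.symmetric.symm _ _ h

lemma linked_trans {N : Network s} {C D E : Cplx s} (h : N.linked C D) (h' : N.linked D E) :
    N.linked C E := Relation.ReflTransGen.trans h h'

lemma mem_complexes_of_step {N : Network s} {C D : Cplx s} (h : N.step C D) :
    C ∈ N.complexes ∧ D ∈ N.complexes := by
  rcases h with h | h
  · exact ⟨Finset.mem_union_left _ (Finset.mem_image.2 ⟨(C, D), h, rfl⟩),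
      Finset.mem_union_right _ (Finset.mem_image.2 ⟨(C, D), h, rfl⟩)⟩
  · exact ⟨Finset.mem_union_right _ (Finset.mem_image.2 ⟨(D, C), h, rfl⟩),
      Finset.mem_union_left _ (Finset.mem_image.2 ⟨(D, C), h, rfl⟩)⟩

lemma linkageClass_eq_of_linked {N : Network s} {C D : Cplx s} (h : N.linked C D) :
    N.linkageClass C = N.linkageClass D := by
  ext E
  exact ⟨fun hE => linked_trans (linked_symm h) hE, fun hE => linked_trans h hE⟩

lemma sub_mem_stoich_of_linked {N : Network s} {C D : Cplx s} (h : N.linked C D) :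
    toR D - toR C ∈ N.stoichSubspace := by
  induction h with
  | refl => simp
  | tail _ hstep ih =>
    rename_i E D _
    have hED : toR D - toR E ∈ N.stoichSubspace := by
      rcases hstep with hr | hr
      · exact subset_span ⟨(E, D), hr, rfl⟩
      · have : toR E - toR D ∈ N.stoichSubspace := subset_span ⟨(D, E), hr, rfl⟩
        have := neg_mem this
        simpa using this
    have := add_mem hED ih
    simpa using this

end Network

lemma mem_uniComplexes {s : ℕ} {U : Cplx s} :
    U ∈ uniComplexes s ↔ U = 0 ∨ ∃ i, U = Pi.single i 1 := by
  simp [uniComplexes, eq_comm]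

lemma toR_zero {s : ℕ} : toR (0 : Cplx s) = 0 := by
  funext j; simp [toR]

lemma toR_single {s : ℕ} (i : Fin s) : toR (Pi.single i 1 : Cplx s) = Pi.single i 1 := by
  funext j
  rcases eq_or_ne j i with rfl | hji
  · simp [toR]
  · simp [toR, Pi.single_apply, hji.symm, if_neg]
section NN'
open Network
variable {s : ℕ} {N N' : Network s}
  (h : N'.reactions = N.reactions
      ∪ (Finset.univ.image fun i : Fin s => ((0 : Cplx s), Pi.single i 1))
      ∪ (Finset.univ.image fun i : Fin s => ((Pi.single i 1 : Cplx s), 0)))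

include h

lemma reactions_subset : N.reactions ⊆ N'.reactions := by
  rw [h]; intro r hr; exact Finset.mem_union_left _ (Finset.mem_union_left _ hr)

lemma inflow_mem (i : Fin s) : ((0 : Cplx s), Pi.single i 1) ∈ N'.reactions := by
  rw [h]
  exact Finset.mem_union_left _ (Finset.mem_union_right _ (Finset.mem_image.2 ⟨i, by simp, rfl⟩))

lemma linked_mono {C D : Cplx s} (hl : N.linked C D) : N'.linked C D := by
  refine Relation.ReflTransGen.mono ?_ _ _ hl
  intro x y hxy
  rcases hxy with hr | hr
  · exact Or.inl (reactions_subset h hr)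
  · exact Or.inr (reactions_subset h hr)

lemma linked_zero_uni {U : Cplx s} (hU : U ∈ uniComplexes s) : N'.linked 0 U := by
  rcases mem_uniComplexes.1 hU with rfl | ⟨i, rfl⟩
  · exact Relation.ReflTransGen.refl
  · exact Relation.ReflTransGen.single (Or.inl (inflow_mem h i))

lemma step_cases {C D : Cplx s} (hst : N'.step C D) :
    N.step C D ∨ (C ∈ uniComplexes s ∧ D ∈ uniComplexes s) := by
  rcases hst with hr | hr <;> rw [h] at hr <;>
    simp only [Finset.mem_union, Finset.mem_image, Finset.mem_univ, true_and] at hr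
  · rcases hr with (hr | ⟨i, hi⟩) | ⟨i, hi⟩
    · exact Or.inl (Or.inl hr)
    · obtain ⟨h1, h2⟩ := Prod.ext_iff.mp hi
      exact Or.inr ⟨mem_uniComplexes.2 (Or.inl h1.symm),
        mem_uniComplexes.2 (Or.inr ⟨i, h2.symm⟩)⟩
    · obtain ⟨h1, h2⟩ := Prod.ext_iff.mp hi
      exact Or.inr ⟨mem_uniComplexes.2 (Or.inr ⟨i, h1.symm⟩),
        mem_uniComplexes.2 (Or.inl h2.symm)⟩
  · rcases hr with (hr | ⟨i, hi⟩) | ⟨i, hi⟩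
    · exact Or.inl (Or.inr hr)
    · obtain ⟨h1, h2⟩ := Prod.ext_iff.mp hi
      exact Or.inr ⟨mem_uniComplexes.2 (Or.inr ⟨i, h2.symm⟩),
        mem_uniComplexes.2 (Or.inl h1.symm)⟩
    · obtain ⟨h1, h2⟩ := Prod.ext_iff.mp hi
      exact Or.inr ⟨mem_uniComplexes.2 (Or.inl h2.symm),
        mem_uniComplexes.2 (Or.inr ⟨i, h1.symm⟩)⟩

/-- If the linkage class of `C` in `N` avoids unimolecular complexes, it is unchanged in `N'`. -/
lemma linked_of_linked' {C : Cplx s} (hC : ∀ U ∈ uniComplexes s, ¬ N.linked C U)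
    {D : Cplx s} (hl : N'.linked C D) : N.linked C D := by
  induction hl with
  | refl => exact Relation.ReflTransGen.refl
  | tail _ hstep ih =>
    rcases step_cases h hstep with hst | ⟨hE, _⟩
    · exact Relation.ReflTransGen.tail ih hst
    · exact absurd ih (hC _ hE)

lemma linkageClass'_eq {C : Cplx s} (hC : ∀ U ∈ uniComplexes s, ¬ N.linked C U) :
    N'.linkageClass C = N.linkageClass C := by
  ext D
  exact ⟨fun hD => linked_of_linked' h hC hD, fun hD => linked_mono h hD⟩

lemma complexes' (hs : 0 < s) : N'.complexes = N.complexes ∪ uniComplexes s := by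
  have hne : Nonempty (Fin s) := ⟨⟨0, hs⟩⟩
  ext C
  simp only [Network.complexes, h, Finset.mem_union, Finset.image_union, Finset.image_image,
    Finset.mem_image, Finset.mem_univ, true_and, uniComplexes, Finset.mem_insert,
    Function.comp, Prod.exists]
  obtain ⟨i0⟩ := hne
  constructor
  · rintro ((((⟨a, b, hab, rfl⟩ | ⟨a, rfl⟩) | ⟨a, rfl⟩)) | (⟨a, b, hab, rfl⟩ | ⟨a, rfl⟩) | ⟨a, rfl⟩)
    · exact Or.inl (Or.inl ⟨a, b, hab, rfl⟩)
    · exact Or.inr (Or.inl rfl)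
    · exact Or.inr (Or.inr ⟨a, rfl⟩)
    · exact Or.inl (Or.inr ⟨a, b, hab, rfl⟩)
    · exact Or.inr (Or.inr ⟨a, rfl⟩)
    · exact Or.inr (Or.inl rfl)
  · rintro ((⟨a, b, hab, rfl⟩ | ⟨a, b, hab, rfl⟩) | rfl | ⟨a, rfl⟩)
    · exact Or.inl (Or.inl (Or.inl ⟨a, b, hab, rfl⟩))
    · exact Or.inr (Or.inl (Or.inl ⟨a, b, hab, rfl⟩))
    · exact Or.inl (Or.inl (Or.inr ⟨i0, rfl⟩))
    · exact Or.inl (Or.inr ⟨a, rfl⟩)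

lemma stoich'_top : N'.stoichSubspace = ⊤ := by
  rw [eq_top_iff]
  intro x _
  have hx : x = ∑ i : Fin s, x i • fun j => if i = j then (1 : ℝ) else 0 := pi_eq_sum_univ x
  rw [hx]
  refine Submodule.sum_mem _ fun i _ => Submodule.smul_mem _ _ ?_
  have hmem : toR (Pi.single i 1) - toR (0 : Cplx s)
      ∈ N'.stoichSubspace :=
    Submodule.subset_span ⟨((0 : Cplx s), Pi.single i 1), inflow_mem h i, rfl⟩
  have : (fun j => if i = j then (1 : ℝ) else 0) = toR (Pi.single i 1) - toR (0 : Cplx s) := by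
    rw [toR_single, toR_zero, sub_zero]
    funext j
    simp [Pi.single_apply, eq_comm]
  rw [this]
  exact hmem

lemma rank' : N'.rank = s := by
  rw [Network.rank, stoich'_top h, finrank_top, Module.finrank_pi, Fintype.card_fin]

end NN'
section Counting
open Network
variable {s : ℕ} {N N' : Network s}
  (h : N'.reactions = N.reactions
      ∪ (Finset.univ.image fun i : Fin s => ((0 : Cplx s), Pi.single i 1))
      ∪ (Finset.univ.image fun i : Fin s => ((Pi.single i 1 : Cplx s), 0)))

include h

lemma classes'_eq (hs : 0 < s) :
    {S : Set (Cplx s) | ∃ C ∈ N'.complexes, S = N'.linkageClass C}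
      = insert (N'.linkageClass 0)
          ({S : Set (Cplx s) | ∃ C ∈ N.complexes, S = N.linkageClass C}
            \ {S : Set (Cplx s) | (∃ C ∈ N.complexes, S = N.linkageClass C)
                ∧ ∃ U ∈ uniComplexes s, U ∈ S}) := by
  have h0uni : (0 : Cplx s) ∈ uniComplexes s := mem_uniComplexes.2 (Or.inl rfl)
  ext S
  simp only [Set.mem_setOf_eq, Set.mem_insert_iff, Set.mem_diff]
  constructor
  · rintro ⟨C, hCmem, rfl⟩
    by_cases hC0 : N'.linked C 0
    · exact Or.inl (linkageClass_eq_of_linked hC0)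
    · right
      have hCN : C ∈ N.complexes := by
        rw [complexes' h hs] at hCmem
        rcases Finset.mem_union.1 hCmem with hc | hu
        · exact hc
        · exact absurd (linked_symm (linked_zero_uni h hu)) hC0
      have hno : ∀ U ∈ uniComplexes s, ¬ N.linked C U := by
        intro U hU hl
        exact hC0 (linked_trans (linked_mono h hl) (linked_symm (linked_zero_uni h hU)))
      refine ⟨⟨C, hCN, linkageClass'_eq h hno⟩, ?_⟩
      rintro ⟨-, U, hU, hUS⟩
      rw [linkageClass'_eq h hno] at hUS
      exact hno U hU hUS
  · rintro (rfl | ⟨⟨C, hC, rfl⟩, hnot⟩)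
    · refine ⟨0, ?_, rfl⟩
      rw [complexes' h hs]
      exact Finset.mem_union_right _ h0uni
    · have hno : ∀ U ∈ uniComplexes s, ¬ N.linked C U := by
        intro U hU hl
        exact hnot ⟨⟨C, hC, rfl⟩, U, hU, hl⟩
      exact ⟨C, by rw [complexes' h hs]; exact Finset.mem_union_left _ hC,
        (linkageClass'_eq h hno).symm⟩

lemma numLinkage'_eq (hs : 0 < s) :
    N'.numLinkage
      + Set.ncard {S : Set (Cplx s) | (∃ C ∈ N.complexes, S = N.linkageClass C)
          ∧ ∃ U ∈ uniComplexes s, U ∈ S}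
      = N.numLinkage + 1 := by
  classical
  set L := {S : Set (Cplx s) | ∃ C ∈ N.complexes, S = N.linkageClass C} with hLdef
  set Lt := {S : Set (Cplx s) | (∃ C ∈ N.complexes, S = N.linkageClass C)
      ∧ ∃ U ∈ uniComplexes s, U ∈ S} with hLtdef
  have hLim : L = N.linkageClass '' ↑N.complexes := by
    ext S
    simp only [hLdef, Set.mem_setOf_eq, Set.mem_image, Finset.mem_coe, eq_comm]
  have hLfin : L.Finite := hLim ▸ (N.complexes.finite_toSet.image _)
  have hLtL : Lt ⊆ L := fun S hS => hS.1
  have hKnot : N'.linkageClass 0 ∉ L \ Lt := by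
    rintro ⟨hL, hnot⟩
    exact hnot ⟨hL, 0, mem_uniComplexes.2 (Or.inl rfl), Relation.ReflTransGen.refl⟩
  have hl' : N'.numLinkage = (L \ Lt).ncard + 1 := by
    rw [Network.numLinkage, classes'_eq h hs]
    exact Set.ncard_insert_of_notMem hKnot (hLfin.diff (t := _))
  have hl : (L \ Lt).ncard + Lt.ncard = N.numLinkage :=
    Set.ncard_diff_add_ncard_of_subset hLtL hLfin
  rw [hl', ← hl]
  ring

end Counting

section Ineq
open Network

lemma key_ineq {s : ℕ} (N : Network s) :
    s + 1 ≤ N.rank + (uniComplexes s \ N.complexes).card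
      + Set.ncard {S : Set (Cplx s) | (∃ C ∈ N.complexes, S = N.linkageClass C)
          ∧ ∃ U ∈ uniComplexes s, U ∈ S} := by
  classical
  set P := N.stoichSubspace with hP
  set Lt := {S : Set (Cplx s) | (∃ C ∈ N.complexes, S = N.linkageClass C)
      ∧ ∃ U ∈ uniComplexes s, U ∈ S} with hLt
  set f : Cplx s → ((Fin s → ℝ) ⧸ P) := fun C => P.mkQ (toR C) with hf
  set S : Set ((Fin s → ℝ) ⧸ P) := f '' ↑(uniComplexes s) with hS
  have hSfin : S.Finite := (uniComplexes s).finite_toSet.image _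
  have h0S : (0 : (Fin s → ℝ) ⧸ P) ∈ S := by
    refine ⟨0, Finset.mem_coe.2 (mem_uniComplexes.2 (Or.inl rfl)), ?_⟩
    rw [hf]; simp [toR_zero]
  -- the image spans the quotient
  have hspanTop : Submodule.span ℝ S = ⊤ := by
    have h1 : Submodule.span ℝ (toR '' (↑(uniComplexes s) : Set (Cplx s))) = ⊤ := by
      rw [eq_top_iff]
      intro x _
      have hx : x = ∑ i : Fin s, x i • fun j => if i = j then (1 : ℝ) else 0 :=
        pi_eq_sum_univ x
      rw [hx]
      refine Submodule.sum_mem _ fun i _ => Submodule.smul_mem _ _ (Submodule.subset_span ?_)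
      refine ⟨Pi.single i 1, mem_uniComplexes.2 (Or.inr ⟨i, rfl⟩), ?_⟩
      rw [toR_single]
      funext j
      simp [Pi.single_apply, eq_comm]
    have h2 : S = P.mkQ '' (toR '' (↑(uniComplexes s) : Set (Cplx s))) := by
      rw [hS, Set.image_image]
    rw [h2, ← Submodule.map_span, h1, Submodule.map_top, Submodule.range_mkQ]
  -- lower bound on ncard S via dimension
  have hdim : Module.finrank ℝ ((Fin s → ℝ) ⧸ P) + 1 ≤ S.ncard := by
    have hdiff : Submodule.span ℝ (S \ {0}) = ⊤ := by
      rw [← Submodule.span_insert_zero, Set.insert_diff_singleton,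
        Set.insert_eq_self.2 h0S, hspanTop]
    set T := (hSfin.diff (t := {0})).toFinset with hT
    have hTS : (T : Set ((Fin s → ℝ) ⧸ P)) = S \ {0} := (hSfin.diff (t := {0})).coe_toFinset
    have hle : Module.finrank ℝ (Submodule.span ℝ (T : Set ((Fin s → ℝ) ⧸ P))) ≤ T.card :=
      finrank_span_finset_le_card T
    rw [hTS, hdiff, finrank_top] at hle
    have hcard : T.card = (S \ {0}).ncard := by
      rw [← hTS, Set.ncard_coe_finset]
    have hsub : ({0} : Set ((Fin s → ℝ) ⧸ P)) ⊆ S := Set.singleton_subset_iff.2 h0S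
    have : (S \ {0}).ncard + ({0} : Set ((Fin s → ℝ) ⧸ P)).ncard = S.ncard :=
      Set.ncard_diff_add_ncard_of_subset hsub hSfin
    rw [Set.ncard_singleton] at this
    omega
  -- upper bound on ncard S
  have hLtfin : Lt.Finite := by
    have : Lt ⊆ N.linkageClass '' ↑N.complexes := by
      rintro T ⟨⟨C, hC, rfl⟩, -⟩
      exact ⟨C, hC, rfl⟩
    exact Set.Finite.subset (N.complexes.finite_toSet.image _) this
  have hupper : S.ncard ≤ Lt.ncard + (uniComplexes s \ N.complexes).card := by
    have hsplit : (↑(uniComplexes s) : Set (Cplx s))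
        = (↑(uniComplexes s) ∩ ↑N.complexes) ∪ (↑(uniComplexes s) \ ↑N.complexes) :=
      (Set.inter_union_diff _ _).symm
    set A : Set (Cplx s) := ↑(uniComplexes s) ∩ ↑N.complexes with hA
    set B : Set (Cplx s) := ↑(uniComplexes s) \ ↑N.complexes with hB
    have hAfin : A.Finite := (uniComplexes s).finite_toSet.inter_of_left _
    have hSAB : S = f '' A ∪ f '' B := by
      rw [hS, hsplit, Set.image_union]
    have hBeq : B = ↑(uniComplexes s \ N.complexes) := by rw [hB, Finset.coe_sdiff]
    have hBcard : (f '' B).ncard ≤ (uniComplexes s \ N.complexes).card := by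
      rw [hBeq]
      have h1 : (f '' ↑(uniComplexes s \ N.complexes)).ncard
          ≤ (↑(uniComplexes s \ N.complexes) : Set (Cplx s)).ncard :=
        Set.ncard_image_le (uniComplexes s \ N.complexes).finite_toSet
      rwa [Set.ncard_coe_finset] at h1
    have hAcard : (f '' A).ncard ≤ Lt.ncard := by
      set ψ : Set (Cplx s) → ((Fin s → ℝ) ⧸ P) := fun T =>
        if hT : ∃ V, V ∈ T ∧ V ∈ N.complexes then f hT.choose else 0 with hψ
      have hfactor : ∀ U ∈ A, f U = ψ (N.linkageClass U) := by
        rintro U ⟨hUuni, hUcx⟩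
        have hT : ∃ V, V ∈ N.linkageClass U ∧ V ∈ N.complexes :=
          ⟨U, Relation.ReflTransGen.refl, hUcx⟩
        rw [hψ]
        simp only [dif_pos hT]
        obtain ⟨hVlc, _⟩ := hT.choose_spec
        have hsub : toR hT.choose - toR U ∈ P := sub_mem_stoich_of_linked hVlc
        rw [hf]
        simp only
        rw [Submodule.mkQ_apply, Submodule.mkQ_apply]
        exact ((Submodule.Quotient.eq P).2 hsub).symm
      have himg : f '' A = ψ '' (N.linkageClass '' A) := by
        rw [← Set.image_comp]
        exact Set.image_congr hfactor
      have hsubLt : N.linkageClass '' A ⊆ Lt := by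
        rintro T ⟨U, ⟨hUuni, hUcx⟩, rfl⟩
        exact ⟨⟨U, hUcx, rfl⟩, U, hUuni, Relation.ReflTransGen.refl⟩
      calc (f '' A).ncard = (ψ '' (N.linkageClass '' A)).ncard := by rw [himg]
        _ ≤ (N.linkageClass '' A).ncard := Set.ncard_image_le (hAfin.image _)
        _ ≤ Lt.ncard := Set.ncard_le_ncard hsubLt hLtfin
    calc S.ncard ≤ (f '' A).ncard + (f '' B).ncard := by
          rw [hSAB]; exact Set.ncard_union_le _ _
      _ ≤ Lt.ncard + (uniComplexes s \ N.complexes).card := add_le_add hAcard hBcard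
  -- dimension count
  have hq : Module.finrank ℝ ((Fin s → ℝ) ⧸ P) + Module.finrank ℝ P = s := by
    rw [Submodule.finrank_quotient_add_finrank, Module.finrank_pi, Fintype.card_fin]
  have hrank : N.rank = Module.finrank ℝ P := rfl
  omega

end Ineq
theorem stmt6 {s : ℕ} (hs : 0 < s) (N N' : Network s)
    (h : N'.reactions = N.reactions
        ∪ (Finset.univ.image fun i : Fin s => ((0 : Cplx s), Pi.single i 1))
        ∪ (Finset.univ.image fun i : Fin s => ((Pi.single i 1 : Cplx s), 0))) :
    N'.deficiency - N.deficiency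
      = (N.rank : ℤ) - s + ((uniComplexes s \ N.complexes).card : ℤ)
        + (Set.ncard {S : Set (Cplx s) |
            (∃ C ∈ N.complexes, S = N.linkageClass C) ∧ ∃ U ∈ uniComplexes s, U ∈ S} : ℤ)
        - 1
    ∧ 0 ≤ N'.deficiency - N.deficiency := by
  classical
  have hcx : N'.numComplexes = (uniComplexes s \ N.complexes).card + N.numComplexes := by
    rw [Network.numComplexes, Network.numComplexes, complexes' h hs, Finset.union_comm,
      ← Finset.card_sdiff_add_card]
  have hlink := numLinkage'_eq h hs
  have hr' := rank' h
  have hkey := key_ineq N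
  constructor <;> · simp only [Network.deficiency]; omega
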